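/- Let −A generate the strongly continuous semigroup (T_t)_{t≥0} on a separable Hilbert space H, and let T̃_t(C) = T_t ∘ C be the lifted semigroup on L_2(K,H) with generator −Ã. Then the domain of Ã equals { C ∈ L_2(K,H) : C(K) ⊆ D(A) and A ∘ C ∈ L_2(K,H) }, and Ã(C) = A ∘ C for all C in this domain. -/

import Mathlib

open scoped Topology

/-- Cauchy–Schwarz bound for `∑' k, (f.repr x k) • y k`. -/
lemma aux_sum_smul {K H : Type*} [NormedAddCommGroup K] [InnerProductSpace ℝ K]
    [NormedAddCommGroup H] [InnerProductSpace ℝ H] [CompleteSpace H]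
    {ι : Type*} (f : HilbertBasis ι ℝ K) (x : K) (y : ι → H)
    (hy : Summable fun k => ‖y k‖ ^ 2) :
    Summable (fun k => f.repr x k • y k) ∧
      ‖∑' k, f.repr x k • y k‖ ≤ Real.sqrt (∑' k, ‖y k‖ ^ 2) * ‖x‖ := by
  set a : ι → ℝ := fun k => f.repr x k with ha
  have ha2 : Summable fun k => a k ^ 2 := by
    have := f.orthonormal.inner_products_summable (x := x)
    simpa [ha, f.repr_apply_apply, Real.norm_eq_abs, sq_abs] using this
  have hbessel : ∀ s : Finset ι, ∑ k ∈ s, a k ^ 2 ≤ ‖x‖ ^ 2 := by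
    intro s
    have := f.orthonormal.sum_inner_products_le (s := s) x
    simpa [ha, f.repr_apply_apply, Real.norm_eq_abs, sq_abs] using this
  have hnorm : ∀ k, ‖a k • y k‖ = |a k| * ‖y k‖ := by
    intro k; rw [norm_smul, Real.norm_eq_abs]
  have hnsum : Summable fun k => ‖a k • y k‖ := by
    refine Summable.of_nonneg_of_le (fun k => norm_nonneg _) (fun k => ?_)
      ((ha2.add hy).div_const 2)
    rw [hnorm k]
    nlinarith [sq_nonneg (|a k| - ‖y k‖), sq_abs (a k), abs_nonneg (a k), norm_nonneg (y k)]
  have hsum : Summable fun k => a k • y k := hnsum.of_norm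
  refine ⟨hsum, ?_⟩
  have hS0 : (0:ℝ) ≤ ∑' k, ‖y k‖ ^ 2 := tsum_nonneg fun k => sq_nonneg _
  refine le_trans (norm_tsum_le_tsum_norm hnsum) ?_
  refine Summable.tsum_le_of_sum_le hnsum ?_
  intro s
  have hcs : (∑ k ∈ s, ‖a k • y k‖) ^ 2 ≤ (∑' k, ‖y k‖ ^ 2) * ‖x‖ ^ 2 := by
    have h1 : (∑ k ∈ s, |a k| * ‖y k‖) ^ 2 ≤ (∑ k ∈ s, |a k| ^ 2) * ∑ k ∈ s, ‖y k‖ ^ 2 :=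
      Finset.sum_mul_sq_le_sq_mul_sq s (fun k => |a k|) fun k => ‖y k‖
    have h2 : ∑ k ∈ s, |a k| ^ 2 ≤ ‖x‖ ^ 2 := by
      simpa [sq_abs] using hbessel s
    have h3 : ∑ k ∈ s, ‖y k‖ ^ 2 ≤ ∑' k, ‖y k‖ ^ 2 :=
      Summable.sum_le_tsum s (fun k _ => sq_nonneg _) hy
    calc (∑ k ∈ s, ‖a k • y k‖) ^ 2 = (∑ k ∈ s, |a k| * ‖y k‖) ^ 2 := by
          simp [hnorm]
      _ ≤ (∑ k ∈ s, |a k| ^ 2) * ∑ k ∈ s, ‖y k‖ ^ 2 := h1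
      _ ≤ ‖x‖ ^ 2 * ∑' k, ‖y k‖ ^ 2 := by
          apply mul_le_mul h2 h3 (Finset.sum_nonneg fun k _ => sq_nonneg _) (sq_nonneg _)
      _ = (∑' k, ‖y k‖ ^ 2) * ‖x‖ ^ 2 := mul_comm _ _
  have hnn : (0:ℝ) ≤ ∑ k ∈ s, ‖a k • y k‖ := Finset.sum_nonneg fun k _ => norm_nonneg _
  calc ∑ k ∈ s, ‖a k • y k‖ = Real.sqrt ((∑ k ∈ s, ‖a k • y k‖) ^ 2) :=
        (Real.sqrt_sq hnn).symm
    _ ≤ Real.sqrt ((∑' k, ‖y k‖ ^ 2) * ‖x‖ ^ 2) := Real.sqrt_le_sqrt hcs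
    _ = Real.sqrt (∑' k, ‖y k‖ ^ 2) * ‖x‖ := by
        rw [Real.sqrt_mul hS0, Real.sqrt_sq (norm_nonneg _)]

/-- Operator-norm-by-Hilbert–Schmidt-norm bound. -/
lemma aux_op_bound {K H : Type*} [NormedAddCommGroup K] [InnerProductSpace ℝ K]
    [NormedAddCommGroup H] [InnerProductSpace ℝ H] [CompleteSpace H]
    {ι : Type*} (f : HilbertBasis ι ℝ K) (G : K →L[ℝ] H)
    (hG : Summable fun k => ‖G (f k)‖ ^ 2) (x : K) :
    ‖G x‖ ≤ Real.sqrt (∑' k, ‖G (f k)‖ ^ 2) * ‖x‖ := by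
  have h1 : HasSum (fun k => f.repr x k • G (f k)) (G x) := by
    simpa [map_smul] using (f.hasSum_repr x).mapL G
  have h2 := (aux_sum_smul f x (fun k => G (f k)) hG).2
  rwa [h1.tsum_eq] at h2


lemma aux_mvt {H : Type*} [NormedAddCommGroup H] [NormedSpace ℝ H]
    (T : ℝ → H →L[ℝ] H)
    (hT0 : T 0 = ContinuousLinearMap.id ℝ H)
    (hTsemi : ∀ s t : ℝ, 0 ≤ s → 0 ≤ t → T (s + t) = (T s).comp (T t))
    (hTcont : ∀ x : H, ContinuousOn (fun t => T t x) (Set.Ici 0))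
    (x z : H)
    (hx : Filter.Tendsto (fun t : ℝ => t⁻¹ • (T t x - x))
      (nhdsWithin 0 (Set.Ioi 0)) (nhds z))
    {t B : ℝ} (ht : 0 < t)
    (hB : ∀ s ∈ Set.Icc (0:ℝ) t, ‖T s z - z‖ ≤ B) :
    ‖t⁻¹ • (T t x - x) - z‖ ≤ B := by
  set g : ℝ → H := fun s => T s x - s • z with hg
  have hderiv : ∀ s ∈ Set.Ico (0:ℝ) t, HasDerivWithinAt g (T s z - z) (Set.Ici s) s := by
    intro s hs
    have hs0 : (0:ℝ) ≤ s := hs.1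
    have h1 : HasDerivWithinAt (fun u => T u x) (T s z) (Set.Ici s) s := by
      rw [hasDerivWithinAt_iff_tendsto_slope, Set.Ici_sdiff_left]
      have hmaps : Filter.Tendsto (fun y => y - s) (nhdsWithin s (Set.Ioi s))
          (nhdsWithin 0 (Set.Ioi 0)) := by
        apply tendsto_nhdsWithin_of_tendsto_nhds_of_eventually_within
        · exact ((continuous_sub_right s).tendsto' s 0 (by simp)).mono_left nhdsWithin_le_nhds
        · filter_upwards [self_mem_nhdsWithin] with y hy
          simpa [Set.mem_Ioi, sub_pos] using hy
      have h2 : Filter.Tendsto (fun y => T s ((y - s)⁻¹ • (T (y - s) x - x)))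
          (nhdsWithin s (Set.Ioi s)) (nhds (T s z)) :=
        ((T s).continuous.tendsto z).comp (hx.comp hmaps)
      refine h2.congr' ?_
      filter_upwards [self_mem_nhdsWithin] with y (hy : s < y)
      have h3 : T y = (T s).comp (T (y - s)) := by
        have := hTsemi s (y - s) hs0 (by linarith)
        rw [← this]; ring_nf
      rw [slope_def_module, h3]
      simp [map_sub, map_smul]
    have h2 : HasDerivWithinAt (fun u : ℝ => u • z) z (Set.Ici s) s := by
      simpa using ((hasDerivAt_id s).smul_const z).hasDerivWithinAt
    exact h1.sub h2
  have hcont : ContinuousOn g (Set.Icc 0 t) := by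
    apply ContinuousOn.sub
    · exact (hTcont x).mono (Set.Icc_subset_Ici_self)
    · exact (continuous_id.smul continuous_const).continuousOn
  have hbound : ∀ s ∈ Set.Ico (0:ℝ) t, ‖T s z - z‖ ≤ B := fun s hs =>
    hB s ⟨hs.1, hs.2.le⟩
  have hkey := norm_image_sub_le_of_norm_deriv_right_le_segment hcont hderiv hbound t
    ⟨ht.le, le_rfl⟩
  -- hkey : ‖g t - g 0‖ ≤ B * (t - 0)
  have hg0 : g 0 = x := by simp [hg, hT0]
  have hgt : g t - g 0 = T t x - x - t • z := by
    rw [hg0]; simp only [hg]; abel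
  have h4 : t⁻¹ • (t • z) = z := by rw [smul_smul, inv_mul_cancel₀ ht.ne', one_smul]
  have heq : t⁻¹ • (T t x - x) - z = t⁻¹ • (g t - g 0) := by
    rw [hgt]
    conv_rhs => rw [smul_sub, h4]
  rw [heq, norm_smul, Real.norm_eq_abs, abs_of_pos (inv_pos.2 ht)]
  calc t⁻¹ * ‖g t - g 0‖ ≤ t⁻¹ * (B * (t - 0)) := by
        apply mul_le_mul_of_nonneg_left _ (inv_pos.2 ht).le
        simpa using hkey
    _ = B := by field_simp; ring

/-- If `−A` (a closed operator with domain `DA`) generates the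
strongly continuous semigroup `(T_t)` on `H`, and `T̃_t(C) = T_t ∘ C` is the
lifted semigroup on the Hilbert–Schmidt space `L₂(K,H)` with generator `−Ã`,
then `D(Ã) = {C ∈ L₂(K,H) : C(K) ⊆ D(A), A ∘ C ∈ L₂(K,H)}` and `Ã C = A ∘ C`
on this domain.  Membership of `C` in `D(Ã)` is expressed by existence of the
Hilbert–Schmidt limit `L = lim_{t→0⁺} (T̃_t C − C)/t` (so that `Ã C = −L`). -/
theorem stmt3 {H K : Type*} [NormedAddCommGroup H] [InnerProductSpace ℝ H]
    [CompleteSpace H] [NormedAddCommGroup K] [InnerProductSpace ℝ K]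
    {ι : Type*} [Countable ι] (f : HilbertBasis ι ℝ K)
    (T : ℝ → H →L[ℝ] H)
    (hT0 : T 0 = ContinuousLinearMap.id ℝ H)
    (hTsemi : ∀ s t : ℝ, 0 ≤ s → 0 ≤ t → T (s + t) = (T s).comp (T t))
    (hTcont : ∀ x : H, ContinuousOn (fun t => T t x) (Set.Ici 0))
    (DA : Set H) (A : H → H)
    -- `A` is a closed operator on `DA`
    (hclosed : IsClosed {p : H × H | p.1 ∈ DA ∧ p.2 = A p.1})
    -- `−A` is the infinitesimal generator of `(T_t)`
    (hdom : ∀ x : H, x ∈ DA ↔ ∃ y : H,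
      Filter.Tendsto (fun t : ℝ => t⁻¹ • (T t x - x))
        (nhdsWithin 0 (Set.Ioi 0)) (nhds y))
    (hgen : ∀ x ∈ DA,
      Filter.Tendsto (fun t : ℝ => t⁻¹ • (T t x - x))
        (nhdsWithin 0 (Set.Ioi 0)) (nhds (-(A x))))
    (C : K →L[ℝ] H) (hC : Summable (fun k => ‖C (f k)‖ ^ 2)) :
    ((∃ L : K →L[ℝ] H, Summable (fun k => ‖L (f k)‖ ^ 2) ∧
        Filter.Tendsto
          (fun t : ℝ => ∑' k, ‖t⁻¹ • (T t (C (f k)) - C (f k)) - L (f k)‖ ^ 2)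
          (nhdsWithin 0 (Set.Ioi 0)) (nhds 0)) ↔
      ((∀ x : K, C x ∈ DA) ∧ Summable (fun k => ‖A (C (f k))‖ ^ 2))) ∧
    (∀ L : K →L[ℝ] H,
      (Summable (fun k => ‖L (f k)‖ ^ 2) ∧
        Filter.Tendsto
          (fun t : ℝ => ∑' k, ‖t⁻¹ • (T t (C (f k)) - C (f k)) - L (f k)‖ ^ 2)
          (nhdsWithin 0 (Set.Ioi 0)) (nhds 0)) →
      ∀ x : K, L x = -(A (C x))) := by
  classical
  -- The pointwise convergence claim extracted from HS convergence
  have claim : ∀ L : K →L[ℝ] H, Summable (fun k => ‖L (f k)‖ ^ 2) →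
      Filter.Tendsto
        (fun t : ℝ => ∑' k, ‖t⁻¹ • (T t (C (f k)) - C (f k)) - L (f k)‖ ^ 2)
        (nhdsWithin 0 (Set.Ioi 0)) (nhds 0) →
      ∀ x : K, Filter.Tendsto (fun t : ℝ => t⁻¹ • (T t (C x) - C x))
        (nhdsWithin 0 (Set.Ioi 0)) (nhds (L x)) := by
    intro L hL htend x
    rw [tendsto_iff_norm_sub_tendsto_zero]
    set F : ℝ → ℝ := fun t => ∑' k, ‖t⁻¹ • (T t (C (f k)) - C (f k)) - L (f k)‖ ^ 2
      with hF
    apply squeeze_zero' (Filter.Eventually.of_forall fun t => norm_nonneg _)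
      (g := fun t => Real.sqrt (F t) * ‖x‖)
    · filter_upwards [self_mem_nhdsWithin] with t (ht : (0:ℝ) < t)
      set Dt : K →L[ℝ] H := t⁻¹ • ((T t).comp C - C) with hDt
      have hDtapp : ∀ v : K, Dt v = t⁻¹ • (T t (C v) - C v) := by
        intro v; simp [hDt]
      set c : ℝ := |t⁻¹| * (‖T t‖ + 1) with hc
      have hDtnorm : ∀ k, ‖Dt (f k)‖ ≤ c * ‖C (f k)‖ := by
        intro k
        rw [hDtapp, norm_smul, Real.norm_eq_abs, hc]
        have h1 : ‖T t (C (f k)) - C (f k)‖ ≤ (‖T t‖ + 1) * ‖C (f k)‖ := by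
          calc ‖T t (C (f k)) - C (f k)‖ ≤ ‖T t (C (f k))‖ + ‖C (f k)‖ := norm_sub_le _ _
            _ ≤ ‖T t‖ * ‖C (f k)‖ + 1 * ‖C (f k)‖ := by
                rw [one_mul]; exact add_le_add ((T t).le_opNorm _) le_rfl
            _ = (‖T t‖ + 1) * ‖C (f k)‖ := by ring
        rw [mul_assoc]
        exact mul_le_mul_of_nonneg_left h1 (abs_nonneg _)
      have hsumG : Summable fun k => ‖(Dt - L) (f k)‖ ^ 2 := by
        refine Summable.of_nonneg_of_le (fun k => sq_nonneg _) (fun k => ?_)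
          (((hC.mul_left (2 * c ^ 2)).add (hL.mul_left 2)))
        have h1 : ‖(Dt - L) (f k)‖ ≤ c * ‖C (f k)‖ + ‖L (f k)‖ := by
          calc ‖(Dt - L) (f k)‖ = ‖Dt (f k) - L (f k)‖ := by simp
            _ ≤ ‖Dt (f k)‖ + ‖L (f k)‖ := norm_sub_le _ _
            _ ≤ c * ‖C (f k)‖ + ‖L (f k)‖ := add_le_add (hDtnorm k) le_rfl
        have h2 : (0:ℝ) ≤ c * ‖C (f k)‖ + ‖L (f k)‖ := by positivity
        have h3 := pow_le_pow_left₀ (norm_nonneg _) h1 2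
        nlinarith [sq_nonneg (c * ‖C (f k)‖ - ‖L (f k)‖), norm_nonneg ((Dt - L) (f k))]
      have hb := aux_op_bound f (Dt - L) hsumG x
      have hFt : F t = ∑' k, ‖(Dt - L) (f k)‖ ^ 2 :=
        tsum_congr fun k => by rw [ContinuousLinearMap.sub_apply, hDtapp]
      have hx2 : (Dt - L) x = t⁻¹ • (T t (C x) - C x) - L x := by
        rw [ContinuousLinearMap.sub_apply, hDtapp]
      rw [← hx2, hFt]
      exact hb
    · have h1 : Filter.Tendsto (fun t => Real.sqrt (F t)) (nhdsWithin 0 (Set.Ioi 0))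
          (nhds 0) := by
        have := (Real.continuous_sqrt.tendsto 0).comp htend
        simpa [Function.comp_def] using this
      simpa using h1.mul_const ‖x‖
  have part2 : ∀ L : K →L[ℝ] H,
      (Summable (fun k => ‖L (f k)‖ ^ 2) ∧
        Filter.Tendsto
          (fun t : ℝ => ∑' k, ‖t⁻¹ • (T t (C (f k)) - C (f k)) - L (f k)‖ ^ 2)
          (nhdsWithin 0 (Set.Ioi 0)) (nhds 0)) →
      ∀ x : K, L x = -(A (C x)) := by
    intro L ⟨hL, htend⟩ x
    have hpt := claim L hL htend x
    have hmem : C x ∈ DA := (hdom (C x)).2 ⟨L x, hpt⟩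
    exact tendsto_nhds_unique hpt (hgen _ hmem)
  constructor
  · constructor
    · rintro ⟨L, hL, htend⟩
      have hpt := claim L hL htend
      have hmem : ∀ x : K, C x ∈ DA := fun x => (hdom (C x)).2 ⟨L x, hpt x⟩
      refine ⟨hmem, ?_⟩
      have hLx : ∀ k, L (f k) = -(A (C (f k))) := fun k => part2 L ⟨hL, htend⟩ (f k)
      have : (fun k => ‖A (C (f k))‖ ^ 2) = fun k => ‖L (f k)‖ ^ 2 := by
        funext k; rw [hLx k, norm_neg]
      rw [this]; exact hL
    · rintro ⟨hmem, hsum⟩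
      set y : ι → H := fun k => -(A (C (f k))) with hy
      have hysum : Summable fun k => ‖y k‖ ^ 2 := by
        simpa [hy, norm_neg] using hsum
      -- construct L
      have hsmul : ∀ x : K, Summable fun k => f.repr x k • y k :=
        fun x => (aux_sum_smul f x y hysum).1
      let L0 : K →ₗ[ℝ] H :=
        { toFun := fun x => ∑' k, f.repr x k • y k
          map_add' := by
            intro u v
            show (∑' k, f.repr (u + v) k • y k)
              = (∑' k, f.repr u k • y k) + ∑' k, f.repr v k • y k
            have : ∀ k, f.repr (u + v) k • y k = f.repr u k • y k + f.repr v k • y k := by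
              intro k
              rw [map_add]
              simp [add_smul]
            rw [tsum_congr this]
            exact Summable.tsum_add (hsmul u) (hsmul v)
          map_smul' := by
            intro a u
            show (∑' k, f.repr (a • u) k • y k) = a • ∑' k, f.repr u k • y k
            have : ∀ k, f.repr (a • u) k • y k = a • (f.repr u k • y k) := by
              intro k
              rw [map_smul]
              simp [smul_smul]
            rw [tsum_congr this, Summable.tsum_const_smul a (hsmul u)] }
      let L : K →L[ℝ] H := L0.mkContinuous (Real.sqrt (∑' k, ‖y k‖ ^ 2))
        (fun x => (aux_sum_smul f x y hysum).2)
      have hLapp : ∀ x : K, L x = ∑' k, f.repr x k • y k := fun x => rfl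
      have hLfk : ∀ k, L (f k) = y k := by
        intro k
        rw [hLapp]
        have h1 : ∀ j, f.repr (f k) j • y j = if j = k then y k else 0 := by
          intro j
          rw [f.repr_self]
          by_cases h : j = k
          · subst h; simp [lp.single_apply_self]
          · simp [lp.single_apply_ne _ _ _ h, h]
        rw [tsum_congr h1, tsum_ite_eq]
      -- uniform bound on the semigroup
      obtain ⟨M, hM⟩ : ∃ M : ℝ, ∀ s : Set.Icc (0:ℝ) 1, ‖T (s : ℝ)‖ ≤ M := by
        apply banach_steinhaus
        intro x
        obtain ⟨Cx, hCx⟩ := (isCompact_Icc (a := (0:ℝ)) (b := 1)).exists_bound_of_continuousOn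
          ((hTcont x).mono Set.Icc_subset_Ici_self)
        exact ⟨Cx, fun s => hCx s s.2⟩
      have hM' : ∀ s : ℝ, 0 ≤ s → s ≤ 1 → ‖T s‖ ≤ M := fun s h1 h2 => hM ⟨s, h1, h2⟩
      refine ⟨L, ?_, ?_⟩
      · have : (fun k => ‖L (f k)‖ ^ 2) = fun k => ‖y k‖ ^ 2 := by
          funext k; rw [hLfk k]
        rw [this]; exact hysum
      · have h0 : Filter.Tendsto
            (fun t : ℝ => ∑' k, ‖t⁻¹ • (T t (C (f k)) - C (f k)) - L (f k)‖ ^ 2)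
            (nhdsWithin 0 (Set.Ioi 0)) (nhds (∑' _ : ι, (0:ℝ))) := by
          apply tendsto_tsum_of_dominated_convergence
            (bound := fun k => ((M + 1) * ‖A (C (f k))‖) ^ 2)
          · have : (fun k => ((M + 1) * ‖A (C (f k))‖) ^ 2)
                = fun k => (M + 1) ^ 2 * ‖A (C (f k))‖ ^ 2 := by
              funext k; ring
            rw [this]
            exact hsum.mul_left _
          · intro k
            have h1 := hgen (C (f k)) (hmem (f k))
            have h2 := tendsto_iff_norm_sub_tendsto_zero.1 h1
            have h3 : Filter.Tendsto
                (fun t : ℝ => ‖t⁻¹ • (T t (C (f k)) - C (f k)) - L (f k)‖ ^ 2)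
                (nhdsWithin 0 (Set.Ioi 0)) (nhds (0 ^ 2)) := by
              apply Filter.Tendsto.pow
              have : L (f k) = -(A (C (f k))) := hLfk k
              rw [this]
              exact h2
            simpa using h3
          · filter_upwards [Ioc_mem_nhdsGT (zero_lt_one (α := ℝ))] with t ht
            intro k
            have hz : ∀ s ∈ Set.Icc (0:ℝ) t,
                ‖T s (-(A (C (f k)))) - (-(A (C (f k))))‖ ≤ (M + 1) * ‖A (C (f k))‖ := by
              intro s hs
              have hs1 : s ≤ 1 := hs.2.trans ht.2
              calc ‖T s (-(A (C (f k)))) - (-(A (C (f k))))‖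
                  ≤ ‖T s (-(A (C (f k))))‖ + ‖-(A (C (f k)))‖ := norm_sub_le _ _
                _ ≤ ‖T s‖ * ‖-(A (C (f k)))‖ + ‖-(A (C (f k)))‖ := by
                    exact add_le_add ((T s).le_opNorm _) le_rfl
                _ ≤ M * ‖A (C (f k))‖ + ‖A (C (f k))‖ := by
                    rw [norm_neg]
                    exact add_le_add (mul_le_mul_of_nonneg_right (hM' s hs.1 hs1)
                      (norm_nonneg _)) le_rfl
                _ = (M + 1) * ‖A (C (f k))‖ := by ring
            have hkey := aux_mvt T hT0 hTsemi hTcont (C (f k)) (-(A (C (f k))))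
              (hgen _ (hmem (f k))) ht.1 hz
            have hL2 : L (f k) = -(A (C (f k))) := hLfk k
            rw [Real.norm_eq_abs, abs_of_nonneg (sq_nonneg _), hL2]
            exact pow_le_pow_left₀ (norm_nonneg _) hkey 2
        simpa using h0
  · exact part2
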